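/- For every real number α with 1 < α ≤ 2, the family (c^α_s)_{s∈ℤ} is absolutely summable, ∑_{s∈ℤ} c^α_s = 0, and ∑_{s∈ℤ} |c^α_s| = 2 c^α_0. -/

import Mathlib

/-- Fractional centered-difference coefficients
`c^α_s = (-1)^s Γ(α+1) / (Γ(α/2 − s + 1) · Γ(α/2 + s + 1))`.
(In Lean, division by zero is zero, matching the stated convention.) -/
noncomputable def cCoef (α : ℝ) (s : ℤ) : ℝ :=
  ((-1 : ℝ) ^ s) * Real.Gamma (α + 1) /
    (Real.Gamma (α / 2 - s + 1) * Real.Gamma (α / 2 + s + 1))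

lemma cCoef_neg (α : ℝ) (s : ℤ) : cCoef α (-s) = cCoef α s := by
  unfold cCoef
  have h1 : ((-1 : ℝ)) ^ (-s) = (-1) ^ s := by
    rw [zpow_neg, ← inv_zpow, inv_neg, inv_one]
  push_cast
  rw [h1]
  ring_nf

lemma cCoef_zero_pos {α : ℝ} (hα₁ : 1 < α) : 0 < cCoef α 0 := by
  unfold cCoef
  have h1 : (0:ℝ) < Real.Gamma (α + 1) := Real.Gamma_pos_of_pos (by linarith)
  have h2 : (0:ℝ) < Real.Gamma (α/2 - (0:ℤ) + 1) := Real.Gamma_pos_of_pos (by push_cast; linarith)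
  have h3 : (0:ℝ) < Real.Gamma (α/2 + (0:ℤ) + 1) := Real.Gamma_pos_of_pos (by push_cast; linarith)
  positivity

lemma cCoef_rec {α : ℝ} (hα₁ : 1 < α) (n : ℕ) :
    (α/2 + n + 1) * cCoef α ((n:ℤ)+1) = ((n:ℝ) - α/2) * cCoef α n := by
  unfold cCoef
  have hpow : ((-1:ℝ)) ^ ((n:ℤ)+1) = -((-1:ℝ))^(n:ℕ) := by
    rw [zpow_add_one₀ (by norm_num), zpow_natCast]; ring
  have hpown : ((-1:ℝ)) ^ ((n:ℤ)) = ((-1:ℝ))^(n:ℕ) := zpow_natCast _ _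
  rw [hpow, hpown]
  have e1 : α / 2 - (((n:ℤ)+1 : ℤ):ℝ) + 1 = α/2 - n := by push_cast; ring
  have e2 : α / 2 + (((n:ℤ)+1 : ℤ):ℝ) + 1 = (α/2 + n + 1) + 1 := by push_cast; ring
  have e3 : α / 2 - ((n:ℤ):ℝ) + 1 = (α/2 - n) + 1 := by push_cast; ring
  have e4 : α / 2 + ((n:ℤ):ℝ) + 1 = α/2 + n + 1 := by push_cast; ring
  rw [e1, e2, e3, e4]
  have hpos : (0:ℝ) < α/2 + n + 1 := by positivity
  rw [Real.Gamma_add_one hpos.ne']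
  by_cases h0 : α/2 - (n:ℝ) = 0
  · have h0' : (n:ℝ) - α/2 = 0 := by linarith
    rw [h0, h0', Real.Gamma_zero]
    simp
  · rw [Real.Gamma_add_one h0]
    by_cases hg : Real.Gamma (α/2 - (n:ℝ)) = 0
    · simp [hg]
    · have hg2 : Real.Gamma (α/2 + (n:ℝ) + 1) ≠ 0 :=
        (Real.Gamma_pos_of_pos (by positivity)).ne'
      have h4 : α/2 + (n:ℝ) + 1 ≠ 0 := hpos.ne'
      set G1 := Real.Gamma (α/2 - (n:ℝ)) with hG1
      set G2 := Real.Gamma (α/2 + (n:ℝ) + 1) with hG2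
      set A := Real.Gamma (α + 1) with hA
      set p := α/2 with hp
      field_simp
      ring

lemma cCoef_nonpos {α : ℝ} (hα₁ : 1 < α) (hα₂ : α ≤ 2) (n : ℕ) :
    cCoef α ((n:ℤ)+1) ≤ 0 := by
  induction n with
  | zero =>
    have h := cCoef_rec hα₁ 0
    push_cast at h ⊢
    have hc0 := cCoef_zero_pos hα₁
    nlinarith
  | succ n ih =>
    have h := cCoef_rec hα₁ (n+1)
    push_cast at h ⊢
    have h1 : (0:ℝ) ≤ (n:ℝ) + 1 - α/2 := by linarith
    have h2 : (0:ℝ) < α/2 + ((n:ℝ)+1) + 1 := by positivity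
    nlinarith

lemma cCoef_key {α : ℝ} (hα₁ : 1 < α) (hα₂ : α ≤ 2) :
    Summable (fun n : ℕ => -cCoef α ((n:ℤ)+1)) ∧
    (∑' n : ℕ, -cCoef α ((n:ℤ)+1)) = cCoef α 0 / 2 := by
  have hα0 : (0:ℝ) < α := by linarith
  have hc0 := cCoef_zero_pos hα₁
  set B : ℕ → ℝ := fun n => (((n:ℝ)) + 1 + α/2) * (-cCoef α ((n:ℤ)+1)) with hBdef
  have hB0 : B 0 = α * cCoef α 0 / 2 := by
    have h := cCoef_rec hα₁ 0
    push_cast at h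
    simp only [hBdef]
    push_cast
    linarith
  have hBsucc : ∀ n : ℕ, B (n+1) = B n + α * cCoef α ((n:ℤ)+1) := by
    intro n
    have h := cCoef_rec hα₁ (n+1)
    push_cast at h
    simp only [hBdef]
    push_cast
    linear_combination -h
  have hsum_range : ∀ N : ℕ, ∑ i ∈ Finset.range N, (α * (-cCoef α ((i:ℤ)+1)))
      = α * cCoef α 0 / 2 - B N := by
    intro N
    induction N with
    | zero => simp [hB0]
    | succ N ihN =>
      rw [Finset.sum_range_succ, ihN, hBsucc N]
      ring
  have hBnonneg : ∀ n, 0 ≤ B n := by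
    intro n
    have := cCoef_nonpos hα₁ hα₂ n
    have h1 : (0:ℝ) ≤ (n:ℝ) + 1 + α/2 := by positivity
    simp only [hBdef]
    exact mul_nonneg h1 (by linarith)
  have hnn : ∀ n : ℕ, 0 ≤ -cCoef α ((n:ℤ)+1) := fun n => by
    have := cCoef_nonpos hα₁ hα₂ n; linarith
  have hsummable : Summable (fun n : ℕ => -cCoef α ((n:ℤ)+1)) := by
    apply summable_of_sum_range_le (c := cCoef α 0 / 2) hnn
    intro N
    have h1 := hsum_range N
    have h2 := hBnonneg N
    rw [← Finset.mul_sum] at h1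
    have : α * ∑ i ∈ Finset.range N, (-cCoef α ((i:ℤ)+1)) ≤ α * (cCoef α 0 / 2) := by
      rw [h1]; linarith
    exact le_of_mul_le_mul_left this hα0
  refine ⟨hsummable, ?_⟩
  set T := ∑' n : ℕ, -cCoef α ((n:ℤ)+1) with hT
  have hps : Filter.Tendsto (fun N => ∑ i ∈ Finset.range N, (-cCoef α ((i:ℤ)+1)))
      Filter.atTop (nhds T) := hsummable.hasSum.tendsto_sum_nat
  have hBt : Filter.Tendsto B Filter.atTop (nhds (α * (cCoef α 0 / 2 - T))) := by
    have h1 : Filter.Tendsto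
        (fun N => α * cCoef α 0 / 2 - α * ∑ i ∈ Finset.range N, (-cCoef α ((i:ℤ)+1)))
        Filter.atTop (nhds (α * cCoef α 0 / 2 - α * T)) :=
      Filter.Tendsto.const_sub _ (hps.const_mul α)
    have h2 : (fun N => α * cCoef α 0 / 2 - α * ∑ i ∈ Finset.range N, (-cCoef α ((i:ℤ)+1))) = B := by
      funext N
      have := hsum_range N
      rw [← Finset.mul_sum] at this
      linarith
    rw [h2] at h1
    convert h1 using 2
    ring
  set M := α * (cCoef α 0 / 2 - T) with hMdef
  have hanti : Antitone B := antitone_nat_of_succ_le (fun n => by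
    rw [hBsucc n]
    have := cCoef_nonpos hα₁ hα₂ n
    nlinarith)
  have hM0 : 0 ≤ M := ge_of_tendsto' hBt hBnonneg
  have hBgeM : ∀ n, M ≤ B n := by
    intro n
    apply le_of_tendsto hBt
    filter_upwards [Filter.eventually_ge_atTop n] with m hm
    exact hanti hm
  have hMzero : M = 0 := by
    by_contra hne
    have hMpos : 0 < M := lt_of_le_of_ne hM0 (Ne.symm hne)
    have hbound : ∀ n : ℕ, M / ((n:ℝ) + 2) ≤ -cCoef α ((n:ℤ)+1) := by
      intro n
      have hd : (0:ℝ) < (n:ℝ) + 1 + α/2 := by positivity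
      have heq : -cCoef α ((n:ℤ)+1) = B n / ((n:ℝ) + 1 + α/2) := by
        rw [eq_div_iff hd.ne']
        simp only [hBdef]
        ring
      rw [heq]
      have ha : M / ((n:ℝ)+2) ≤ M / ((n:ℝ)+1+α/2) :=
        div_le_div_of_nonneg_left hM0 hd (by linarith)
      have hb : M / ((n:ℝ)+1+α/2) ≤ B n / ((n:ℝ)+1+α/2) :=
        (div_le_div_iff_of_pos_right hd).mpr (hBgeM n)
      linarith
    have hs2 : Summable (fun n : ℕ => M / ((n:ℝ) + 2)) :=
      Summable.of_nonneg_of_le (fun n => by positivity) hbound hsummable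
    have hs3 : Summable (fun n : ℕ => 1 / ((n:ℝ) + 2)) := by
      have h := hs2.mul_right M⁻¹
      convert h using 2 with n
      rfl
      field_simp
    have hs4 : Summable (fun n : ℕ => 1 / ((n:ℝ))) := by
      rw [← summable_nat_add_iff 2]
      convert hs3 using 2 with n
      rfl
      push_cast
      ring
    exact Real.not_summable_one_div_natCast hs4
  have hfin : α * (cCoef α 0 / 2 - T) = 0 := hMzero
  have : cCoef α 0 / 2 - T = 0 := by
    rcases mul_eq_zero.mp hfin with h | h
    · exact absurd h hα0.ne'
    · exact h
  linarith

set_option maxHeartbeats 1000000 in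
/-- For `1 < α ≤ 2`, the family `(c^α_s)_{s∈ℤ}` is absolutely summable,
`∑_{s∈ℤ} c^α_s = 0`, and `∑_{s∈ℤ} |c^α_s| = 2 c^α_0`. -/
theorem cCoef_summable_sum_zero (α : ℝ) (hα₁ : 1 < α) (hα₂ : α ≤ 2) :
    Summable (fun s : ℤ => |cCoef α s|) ∧
    (∑' s : ℤ, cCoef α s) = 0 ∧
    (∑' s : ℤ, |cCoef α s|) = 2 * cCoef α 0 := by
  obtain ⟨hsum, hval⟩ := cCoef_key hα₁ hα₂
  have hc0 := cCoef_zero_pos hα₁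
  -- absolute values of the tail
  have habs : ∀ n : ℕ, |cCoef α ((n:ℤ)+1)| = -cCoef α ((n:ℤ)+1) :=
    fun n => abs_of_nonpos (cCoef_nonpos hα₁ hα₂ n)
  -- summability over ℕ of |cCoef α ↑n|
  have hnatabs : Summable (fun n : ℕ => |cCoef α (n:ℤ)|) := by
    rw [← summable_nat_add_iff 1]
    have : (fun n : ℕ => |cCoef α ((n+1 : ℕ):ℤ)|) = fun n : ℕ => -cCoef α ((n:ℤ)+1) := by
      funext n
      rw [← habs n]
      norm_cast
    rw [this]
    exact hsum
  have hnegabs : (fun n : ℕ => |cCoef α (-((n:ℤ)+1))|) = fun n : ℕ => -cCoef α ((n:ℤ)+1) := by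
    funext n
    rw [cCoef_neg, habs n]
  have hnegsummable : Summable (fun n : ℕ => |cCoef α (-((n:ℤ)+1))|) := by
    rw [hnegabs]; exact hsum
  have hSabs : Summable (fun s : ℤ => |cCoef α s|) :=
    Summable.of_nat_of_neg_add_one hnatabs hnegsummable
  refine ⟨hSabs, ?_, ?_⟩
  · -- sum = 0
    have hnat : Summable (fun n : ℕ => cCoef α (n:ℤ)) := (hnatabs).of_abs
    have hneg : Summable (fun n : ℕ => cCoef α (-((n:ℤ)+1))) := hnegsummable.of_abs
    have htail : (∑' n : ℕ, cCoef α ((n:ℤ)+1)) = -(cCoef α 0 / 2) := by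
      have := hval
      rw [tsum_neg] at this
      linarith
    have htail' : Summable (fun n : ℕ => cCoef α ((n:ℤ)+1)) := by
      have := hsum.neg
      simpa using this
    have h1 : (∑' n : ℕ, cCoef α (n:ℤ)) = cCoef α 0 - cCoef α 0 / 2 := by
      rw [Summable.tsum_eq_zero_add hnat]
      have e : (fun n : ℕ => cCoef α ((n+1 : ℕ):ℤ)) = fun n : ℕ => cCoef α ((n:ℤ)+1) := by
        funext n; norm_cast
      simp only [Nat.cast_zero]
      rw [e, htail]
      ring
    have h2 : (∑' n : ℕ, cCoef α (-((n:ℤ)+1))) = -(cCoef α 0 / 2) := by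
      have e : (fun n : ℕ => cCoef α (-((n:ℤ)+1))) = fun n : ℕ => cCoef α ((n:ℤ)+1) := by
        funext n; rw [cCoef_neg]
      rw [e, htail]
    have hsplit := tsum_of_nat_of_neg_add_one (f := fun s : ℤ => cCoef α s) hnat hneg
    rw [h1, h2] at hsplit
    rw [show (fun s : ℤ => cCoef α s) = cCoef α from rfl] at hsplit
    rw [hsplit]
    ring
  · -- sum of abs = 2 c0
    have h1 : (∑' n : ℕ, |cCoef α (n:ℤ)|) = cCoef α 0 + cCoef α 0 / 2 := by
      rw [Summable.tsum_eq_zero_add hnatabs]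
      have e : (fun n : ℕ => |cCoef α ((n+1 : ℕ):ℤ)|) = fun n : ℕ => -cCoef α ((n:ℤ)+1) := by
        funext n
        rw [← habs n]
        norm_cast
      simp only [Nat.cast_zero]
      rw [e, hval, abs_of_pos hc0]
    have h2 : (∑' n : ℕ, |cCoef α (-((n:ℤ)+1))|) = cCoef α 0 / 2 := by
      rw [hnegabs, hval]
    have hsplit := tsum_of_nat_of_neg_add_one (f := fun s : ℤ => |cCoef α s|) hnatabs hnegsummable
    rw [h1, h2] at hsplit
    rw [hsplit]
    ring
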